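/- With the weak Hermite reduction H associated to a linear differential operator M with polynomial coefficients over a field K of characteristic zero, H is idempotent: H(H(R)) = H(R) for all R ∈ K(x). -/

import Mathlib

open Polynomial

/-- The derivative of a rational function, `(p/q)' = (p'q − pq')/q²`. -/
noncomputable def ratDeriv {K : Type*} [Field K] (f : RatFunc K) : RatFunc K :=
  (algebraMap K[X] (RatFunc K) (derivative f.num) * algebraMap K[X] (RatFunc K) f.denom -
      algebraMap K[X] (RatFunc K) f.num * algebraMap K[X] (RatFunc K) (derivative f.denom)) /
    algebraMap K[X] (RatFunc K) (f.denom ^ 2)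

/-- The action of the differential operator `M = ∑_{i=0}^r pᵢ ∂ⁱ` (with polynomial
coefficients `pᵢ`) on a rational function. -/
noncomputable def applyOp {K : Type*} [Field K] (r : ℕ) (p : ℕ → K[X]) (f : RatFunc K) :
    RatFunc K :=
  ∑ i ∈ Finset.range (r + 1), algebraMap K[X] (RatFunc K) (p i) * ratDeriv^[i] f

/-- `f` has no pole at `α`. -/
def regAt {K : Type*} [Field K] (α : K) (f : RatFunc K) : Prop :=
  Polynomial.eval α f.denom ≠ 0

/-- `ord_α f ≥ m` : the valuation of `f` at `α` (as a Laurent series in `x − α`)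
is at least `m`. -/
def ordGe {K : Type*} [Field K] (α : K) (m : ℤ) (f : RatFunc K) : Prop :=
  regAt α ((RatFunc.X - RatFunc.C α) ^ (-m) * f)

/-- `f` has degree (order at infinity, negated) at most `m`, i.e. `ord_∞ f ≥ −m`. -/
def degLe {K : Type*} [Field K] (m : ℤ) (f : RatFunc K) : Prop :=
  f = 0 ∨ RatFunc.intDegree f ≤ m

namespace WHI
variable {K : Type*} [Field K]

local notation "ψ" => algebraMap K[X] (RatFunc K)

lemma XC (α : K) : RatFunc.X - RatFunc.C α = ψ (X - C α) := by
  simp [RatFunc.algebraMap_X, RatFunc.algebraMap_C]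

lemma XC_ne (α : K) : RatFunc.X - RatFunc.C α ≠ 0 := by
  rw [XC]; exact RatFunc.algebraMap_ne_zero (Polynomial.X_sub_C_ne_zero α)

/-- characterization of ordGe -/
lemma ordGe_iff {α : K} {m : ℤ} {f : RatFunc K} :
    ordGe α m f ↔
    ∃ a b : K[X], Polynomial.eval α b ≠ 0 ∧
      f * ψ b = (RatFunc.X - RatFunc.C α) ^ m * ψ a := by
  rw [ordGe, regAt]
  constructor
  · intro h
    set g := (RatFunc.X - RatFunc.C α) ^ (-m) * f with hg
    refine ⟨g.num, g.denom, h, ?_⟩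
    have hf : f = (RatFunc.X - RatFunc.C α) ^ m * g := by
      rw [hg, ← mul_assoc, ← zpow_add₀ (XC_ne α), add_neg_cancel, zpow_zero, one_mul]
    rw [hf, mul_assoc]
    congr 1
    exact ((div_eq_iff (RatFunc.algebraMap_ne_zero g.denom_ne_zero)).mp
      (RatFunc.num_div_denom g)).symm
  · rintro ⟨a, b, hb, heq⟩
    have hb0 : b ≠ 0 := fun h => hb (by simp [h])
    have hg : (RatFunc.X - RatFunc.C α) ^ (-m) * f = ψ a / ψ b := by
      rw [eq_div_iff (RatFunc.algebraMap_ne_zero hb0), mul_assoc, heq, ← mul_assoc,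
        ← zpow_add₀ (XC_ne α), neg_add_cancel, zpow_zero, one_mul]
    have hdvd : ((RatFunc.X - RatFunc.C α) ^ (-m) * f).denom ∣ b := by
      rw [hg]
      exact (RatFunc.denom_dvd hb0).mpr ⟨a, rfl⟩
    obtain ⟨t, ht⟩ := hdvd
    intro h0
    rw [ht, eval_mul, h0, zero_mul] at hb
    exact hb rfl


lemma smul_eq (c : K) (f : RatFunc K) : c • f = ψ (C c) * f := by
  rw [Algebra.smul_def, IsScalarTower.algebraMap_apply K K[X] (RatFunc K), Polynomial.algebraMap_eq]

lemma mul_denom (f : RatFunc K) : f * ψ f.denom = ψ f.num :=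
  ((div_eq_iff (RatFunc.algebraMap_ne_zero f.denom_ne_zero)).mp
    (RatFunc.num_div_denom f)).symm

lemma theta_pow (α : K) (k : ℕ) :
    (RatFunc.X - RatFunc.C α) ^ (k : ℤ) = ψ ((X - C α) ^ k) := by
  rw [zpow_natCast, map_pow, XC]

lemma ordGe_zero_fun (α : K) (m : ℤ) : ordGe α m (0 : RatFunc K) :=
  ordGe_iff.mpr ⟨0, 1, by simp, by simp⟩

lemma ordGe_mono {α : K} {m m' : ℤ} {f : RatFunc K} (h : m' ≤ m) (hf : ordGe α m f) :
    ordGe α m' f := by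
  obtain ⟨a, b, hb, heq⟩ := ordGe_iff.mp hf
  refine ordGe_iff.mpr ⟨(X - C α) ^ (m - m').toNat * a, b, hb, ?_⟩
  rw [heq, map_mul, ← theta_pow, ← mul_assoc, ← zpow_add₀ (XC_ne α)]
  congr 2
  omega

lemma ordGe_add {α : K} {m : ℤ} {f g : RatFunc K} (hf : ordGe α m f) (hg : ordGe α m g) :
    ordGe α m (f + g) := by
  obtain ⟨a₁, b₁, hb₁, h1⟩ := ordGe_iff.mp hf
  obtain ⟨a₂, b₂, hb₂, h2⟩ := ordGe_iff.mp hg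
  refine ordGe_iff.mpr ⟨a₁ * b₂ + a₂ * b₁, b₁ * b₂, by simp [hb₁, hb₂], ?_⟩
  have : (f + g) * ψ (b₁ * b₂) = (f * ψ b₁) * ψ b₂ + (g * ψ b₂) * ψ b₁ := by
    rw [map_mul]; ring
  rw [this, h1, h2, map_add, map_mul, map_mul]; ring

lemma ordGe_neg {α : K} {m : ℤ} {f : RatFunc K} (hf : ordGe α m f) : ordGe α m (-f) := by
  obtain ⟨a, b, hb, heq⟩ := ordGe_iff.mp hf
  exact ordGe_iff.mpr ⟨-a, b, hb, by rw [neg_mul, heq, map_neg, mul_neg]⟩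

lemma ordGe_sub {α : K} {m : ℤ} {f g : RatFunc K} (hf : ordGe α m f) (hg : ordGe α m g) :
    ordGe α m (f - g) := by
  rw [sub_eq_add_neg]; exact ordGe_add hf (ordGe_neg hg)

lemma ordGe_mul0 {α : K} {m : ℤ} {f g : RatFunc K} (hf : ordGe α m f) (hg : ordGe α 0 g) :
    ordGe α m (f * g) := by
  obtain ⟨a₁, b₁, hb₁, h1⟩ := ordGe_iff.mp hf
  obtain ⟨a₂, b₂, hb₂, h2⟩ := ordGe_iff.mp hg
  rw [zpow_zero, one_mul] at h2
  refine ordGe_iff.mpr ⟨a₁ * a₂, b₁ * b₂, by simp [hb₁, hb₂], ?_⟩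
  have : f * g * ψ (b₁ * b₂) = (f * ψ b₁) * (g * ψ b₂) := by rw [map_mul]; ring
  rw [this, h1, h2, map_mul]; ring

lemma ordGe_smul {α : K} {m : ℤ} {c : K} {f : RatFunc K} (hf : ordGe α m f) :
    ordGe α m (c • f) := by
  obtain ⟨a, b, hb, heq⟩ := ordGe_iff.mp hf
  refine ordGe_iff.mpr ⟨C c * a, b, hb, ?_⟩
  rw [smul_eq, mul_assoc, heq, map_mul]; ring

lemma ordGe_sum {α : K} {m : ℤ} {ι : Type*} (s : Finset ι) (F : ι → RatFunc K)
    (h : ∀ i ∈ s, ordGe α m (F i)) : ordGe α m (∑ i ∈ s, F i) := by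
  classical
  induction s using Finset.induction with
  | empty => simpa using ordGe_zero_fun α m
  | insert _ _ hx ih =>
    rw [Finset.sum_insert hx]
    exact ordGe_add (h _ (Finset.mem_insert_self _ _))
      (ih fun i hi => h i (Finset.mem_insert_of_mem hi))

lemma ordGe_poly (β : K) (q : K[X]) : ordGe β 0 (ψ q) :=
  ordGe_iff.mpr ⟨q, 1, by simp, by simp⟩

lemma ordGe_self_zpow (α : K) (k : ℤ) : ordGe α k ((RatFunc.X - RatFunc.C α) ^ k) :=
  ordGe_iff.mpr ⟨1, 1, by simp, by simp⟩

lemma ordGe_zpow_other {α β : K} (h : β ≠ α) (k : ℤ) :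
    ordGe β 0 ((RatFunc.X - RatFunc.C α) ^ k) := by
  rcases le_or_gt 0 k with hk | hk
  · refine ordGe_iff.mpr ⟨(X - C α) ^ k.toNat, 1, by simp, ?_⟩
    rw [map_one, mul_one, zpow_zero, one_mul, ← theta_pow, Int.toNat_of_nonneg hk]
  · refine ordGe_iff.mpr ⟨1, (X - C α) ^ (-k).toNat, ?_, ?_⟩
    · simp [sub_eq_zero, h]
    · rw [← theta_pow, Int.toNat_of_nonneg (by omega : (0:ℤ) ≤ -k),
        ← zpow_add₀ (XC_ne α), add_neg_cancel, zpow_zero]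
      simp

lemma ordGe_zero_iff_regAt {β : K} {f : RatFunc K} : ordGe β 0 f ↔ regAt β f := by
  rw [ordGe, neg_zero, zpow_zero, one_mul]

lemma ordGe_ratDeriv {β : K} {f : RatFunc K} (hf : ordGe β 0 f) : ordGe β 0 (ratDeriv f) := by
  have hd : Polynomial.eval β f.denom ≠ 0 := ordGe_zero_iff_regAt.mp hf
  refine ordGe_iff.mpr ⟨derivative f.num * f.denom - f.num * derivative f.denom, f.denom ^ 2,
    by simp [hd], ?_⟩
  rw [zpow_zero, one_mul, ratDeriv,
    div_mul_cancel₀ _ (RatFunc.algebraMap_ne_zero (pow_ne_zero 2 f.denom_ne_zero)),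
    map_sub, map_mul, map_mul]

lemma ordGe_ratDeriv_iter {β : K} {f : RatFunc K} (hf : ordGe β 0 f) (i : ℕ) :
    ordGe β 0 (ratDeriv^[i] f) := by
  induction i with
  | zero => exact hf
  | succ n ih => rw [Function.iterate_succ_apply']; exact ordGe_ratDeriv ih

lemma ordGe_applyOp {β : K} {f : RatFunc K} (r : ℕ) (p : ℕ → K[X]) (hf : ordGe β 0 f) :
    ordGe β 0 (applyOp r p f) :=
  ordGe_sum _ _ fun i _ => ordGe_mul0 (ordGe_poly β (p i)) (ordGe_ratDeriv_iter hf i)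

lemma theta_cancel (α : K) (k : ℤ) (f : RatFunc K) :
    (RatFunc.X - RatFunc.C α) ^ (-k) * ((RatFunc.X - RatFunc.C α) ^ k * f) = f := by
  rw [← mul_assoc, ← zpow_add₀ (XC_ne α), neg_add_cancel, zpow_zero, one_mul]

lemma ordGe_shift {α : K} {m : ℤ} {f : RatFunc K} (k : ℤ) (hf : ordGe α m f) :
    ordGe α (m + k) ((RatFunc.X - RatFunc.C α) ^ k * f) := by
  obtain ⟨a, b, hb, heq⟩ := ordGe_iff.mp hf
  refine ordGe_iff.mpr ⟨a, b, hb, ?_⟩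
  rw [mul_assoc, heq, ← mul_assoc, ← zpow_add₀ (XC_ne α), add_comm k m]

lemma ordGe_unshift {α : K} {m k : ℤ} {f : RatFunc K}
    (hf : ordGe α (m + k) ((RatFunc.X - RatFunc.C α) ^ k * f)) : ordGe α m f := by
  have := ordGe_shift (-k) hf
  rw [theta_cancel, add_neg_cancel_right] at this
  exact this

lemma exists_ordGe (α : K) (f : RatFunc K) : ∃ n : ℕ, ordGe α (-(n : ℤ)) f := by
  set n := rootMultiplicity α f.denom with hn
  obtain ⟨t, ht, htd⟩ :=
    Polynomial.exists_eq_pow_rootMultiplicity_mul_and_not_dvd f.denom f.denom_ne_zero α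
  have hevalt : Polynomial.eval α t ≠ 0 := fun h0 => htd (dvd_iff_isRoot.mpr h0)
  have hmd := mul_denom f
  rw [ht, map_mul, ← theta_pow] at hmd
  have h2 : (RatFunc.X - RatFunc.C α) ^ (n : ℤ) * (f * ψ t) = ψ f.num := by
    rw [← hmd]; ring
  refine ⟨n, ordGe_iff.mpr ⟨f.num, t, hevalt, ?_⟩⟩
  rw [← h2, ← mul_assoc, ← zpow_add₀ (XC_ne α), neg_add_cancel, zpow_zero, one_mul]

lemma lead_alpha {α : K} {s : ℤ} {f : RatFunc K} (h1 : ordGe α (-s) f)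
    (h2 : ¬ ordGe α (-s + 1) f) :
    ∃ c : K, c ≠ 0 ∧ ordGe α (-s + 1) (f - c • (RatFunc.X - RatFunc.C α) ^ (-s)) := by
  set g := (RatFunc.X - RatFunc.C α) ^ s * f with hgdef
  have hg0 : ordGe α 0 g := by
    have := ordGe_shift s h1
    rwa [neg_add_cancel] at this
  have hg1 : ¬ ordGe α 1 g := by
    intro h
    refine h2 (ordGe_unshift (m := -s + 1) (k := s) ?_)
    rw [show -s + 1 + s = (1:ℤ) by ring]
    exact h
  have hreg : Polynomial.eval α g.denom ≠ 0 := ordGe_zero_iff_regAt.mp hg0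
  have hnum : Polynomial.eval α g.num ≠ 0 := by
    intro h0
    obtain ⟨u, hu⟩ := dvd_iff_isRoot.mpr h0
    exact hg1 (ordGe_iff.mpr ⟨u, g.denom, hreg,
      by rw [mul_denom, hu, map_mul, ← XC, zpow_one]⟩)
  refine ⟨Polynomial.eval α g.num / Polynomial.eval α g.denom, div_ne_zero hnum hreg, ?_⟩
  set c := Polynomial.eval α g.num / Polynomial.eval α g.denom with hcdef
  set N := g.num - C c * g.denom with hNdef
  have hN0 : Polynomial.eval α N = 0 := by
    simp only [hNdef, eval_sub, eval_mul, eval_C, hcdef]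
    rw [div_mul_cancel₀ _ hreg, sub_self]
  obtain ⟨u, hu⟩ := dvd_iff_isRoot.mpr hN0
  have h3 : ordGe α 1 (g - ψ (C c)) := by
    refine ordGe_iff.mpr ⟨u, g.denom, hreg, ?_⟩
    rw [sub_mul, mul_denom, ← map_mul, ← map_sub, ← hNdef, hu, map_mul, ← XC, zpow_one]
  have h4 := ordGe_shift (-s) h3
  have h5 : (RatFunc.X - RatFunc.C α) ^ (-s) * (g - ψ (C c)) =
      f - c • (RatFunc.X - RatFunc.C α) ^ (-s) := by
    rw [mul_sub, hgdef, theta_cancel, smul_eq]; ring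
  rw [h5, show (1:ℤ) + -s = -s + 1 by ring] at h4
  exact h4

lemma no_pole_poly [IsAlgClosed K] {f : RatFunc K} (h : ∀ β : K, ordGe β 0 f) :
    ∃ q : K[X], f = ψ q := by
  have hd : f.denom.natDegree = 0 := by
    by_contra hnd
    obtain ⟨β, hβ⟩ := IsAlgClosed.exists_root f.denom (by
      rw [Polynomial.degree_eq_natDegree f.denom_ne_zero]
      exact_mod_cast hnd)
    exact ordGe_zero_iff_regAt.mp (h β) hβ
  have h1 : f.denom = 1 := (RatFunc.monic_denom f).natDegree_eq_zero.mp hd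
  refine ⟨f.num, ?_⟩
  conv_lhs => rw [← RatFunc.num_div_denom f]
  rw [h1, map_one, div_one]

lemma poly_degLe_neg_one {q : K[X]} (h : degLe (-1) (ψ q)) : q = 0 := by
  rcases h with h | h
  · rwa [map_eq_zero_iff _ (RatFunc.algebraMap_injective K)] at h
  · rw [RatFunc.intDegree_polynomial] at h
    omega

lemma zero_of_reg_degLe [IsAlgClosed K] {f : RatFunc K} (h : ∀ β : K, ordGe β 0 f)
    (hd : degLe (-1) f) : f = 0 := by
  obtain ⟨q, rfl⟩ := no_pole_poly h
  rw [poly_degLe_neg_one hd, map_zero]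

lemma degLe_zero_fun (m : ℤ) : degLe m (0 : RatFunc K) := Or.inl rfl

lemma degLe_mono {m m' : ℤ} {f : RatFunc K} (h : m ≤ m') (hf : degLe m f) : degLe m' f := by
  rcases hf with h0 | h1
  · exact Or.inl h0
  · exact Or.inr (le_trans h1 h)

lemma degLe_add {m : ℤ} {f g : RatFunc K} (hf : degLe m f) (hg : degLe m g) :
    degLe m (f + g) := by
  rcases hf with rfl | hf
  · simpa using hg
  rcases hg with rfl | hg
  · rw [add_zero]; exact Or.inr hf
  by_cases hfg : f + g = 0
  · exact Or.inl hfg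
  · by_cases hg0 : g = 0
    · subst hg0; rw [add_zero]; exact Or.inr hf
    · exact Or.inr (le_trans (RatFunc.intDegree_add_le hg0 hfg) (max_le hf hg))

lemma degLe_neg {m : ℤ} {f : RatFunc K} (hf : degLe m f) : degLe m (-f) := by
  rcases hf with rfl | hf
  · simp [degLe_zero_fun]
  · exact Or.inr (by rwa [RatFunc.intDegree_neg])

lemma degLe_sub {m : ℤ} {f g : RatFunc K} (hf : degLe m f) (hg : degLe m g) :
    degLe m (f - g) := by
  rw [sub_eq_add_neg]; exact degLe_add hf (degLe_neg hg)

lemma degLe_smul {m : ℤ} {c : K} {f : RatFunc K} (hf : degLe m f) : degLe m (c • f) := by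
  by_cases hc : c = 0
  · rw [hc, zero_smul]; exact Or.inl rfl
  rcases hf with rfl | hf
  · rw [smul_zero]; exact Or.inl rfl
  by_cases hf0 : f = 0
  · rw [hf0, smul_zero]; exact Or.inl rfl
  refine Or.inr ?_
  rw [smul_eq, RatFunc.intDegree_mul (RatFunc.algebraMap_ne_zero (by simpa using hc)) hf0,
    RatFunc.intDegree_polynomial, natDegree_C]
  simpa using hf

lemma degLe_sum {m : ℤ} {ι : Type*} (s : Finset ι) (F : ι → RatFunc K)
    (h : ∀ i ∈ s, degLe m (F i)) : degLe m (∑ i ∈ s, F i) := by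
  classical
  induction s using Finset.induction with
  | empty => simpa using degLe_zero_fun m
  | insert _ _ hx ih =>
    rw [Finset.sum_insert hx]
    exact degLe_add (h _ (Finset.mem_insert_self _ _))
      (ih fun i hi => h i (Finset.mem_insert_of_mem hi))

lemma X_pow_nat (n : ℕ) : (RatFunc.X : RatFunc K) ^ (n : ℤ) = ψ (X ^ n) := by
  rw [zpow_natCast, map_pow, RatFunc.algebraMap_X]

lemma X_zpow_nonneg {s : ℤ} (hs : 0 ≤ s) :
    (RatFunc.X : RatFunc K) ^ s = ψ (X ^ s.toNat) := by
  rw [← X_pow_nat, Int.toNat_of_nonneg hs]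

lemma degLe_X_pow {n : ℕ} {m : ℤ} (h : (n : ℤ) ≤ m) :
    degLe m ((RatFunc.X : RatFunc K) ^ (n : ℤ)) := by
  rw [X_pow_nat]
  exact Or.inr (by rw [RatFunc.intDegree_polynomial, natDegree_X_pow]; exact h)

lemma exists_degLe (f : RatFunc K) : ∃ n : ℕ, degLe ((n : ℤ) - 1) f := by
  by_cases hf : f = 0
  · exact ⟨0, Or.inl hf⟩
  · exact ⟨(f.intDegree + 1).toNat, Or.inr (by omega)⟩

lemma div_polys_intDegree {a b : K[X]} (ha : a ≠ 0) (hb : b ≠ 0) :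
    RatFunc.intDegree (ψ a / ψ b) = (natDegree a : ℤ) - natDegree b := by
  have hq : ψ a / ψ b ≠ 0 :=
    div_ne_zero (RatFunc.algebraMap_ne_zero ha) (RatFunc.algebraMap_ne_zero hb)
  have h := RatFunc.intDegree_mul hq (RatFunc.algebraMap_ne_zero hb)
  rw [div_mul_cancel₀ _ (RatFunc.algebraMap_ne_zero hb), RatFunc.intDegree_polynomial,
    RatFunc.intDegree_polynomial] at h
  omega

lemma lead_inf {f : RatFunc K} {n : ℕ} (h1 : degLe (n : ℤ) f) (h2 : ¬ degLe ((n : ℤ) - 1) f) :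
    ∃ c : K, c ≠ 0 ∧ degLe ((n : ℤ) - 1) (f - c • RatFunc.X ^ (n : ℤ)) := by
  have hf0 : f ≠ 0 := fun h => h2 (Or.inl h)
  have hdeg : f.intDegree = n := by
    rcases h1 with h1 | h1
    · exact absurd h1 hf0
    · rw [degLe, not_or] at h2
      omega
  have hnum0 : f.num ≠ 0 := RatFunc.num_ne_zero hf0
  have hlcd : f.denom.leadingCoeff ≠ 0 := leadingCoeff_ne_zero.mpr f.denom_ne_zero
  set c := f.num.leadingCoeff / f.denom.leadingCoeff with hcdef
  have hc : c ≠ 0 := div_ne_zero (leadingCoeff_ne_zero.mpr hnum0) hlcd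
  refine ⟨c, hc, ?_⟩
  set N := f.num - C c * X ^ n * f.denom with hNdef
  have hdegs : f.num.natDegree = n + f.denom.natDegree := by
    have : (f.num.natDegree : ℤ) - f.denom.natDegree = n := hdeg
    omega
  have hq0 : C c * X ^ n * f.denom ≠ 0 :=
    mul_ne_zero (mul_ne_zero (by simpa using hc) (pow_ne_zero n X_ne_zero)) f.denom_ne_zero
  have hndq : (C c * X ^ n * f.denom).natDegree = n + f.denom.natDegree := by
    rw [natDegree_mul (mul_ne_zero (by simpa using hc) (pow_ne_zero n X_ne_zero)) f.denom_ne_zero,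
      natDegree_mul (by simpa using hc) (pow_ne_zero n X_ne_zero), natDegree_C, natDegree_X_pow]
    omega
  have hrepr : f - c • RatFunc.X ^ (n : ℤ) = ψ N / ψ f.denom := by
    rw [smul_eq, X_pow_nat, hNdef, map_sub, map_mul, map_mul]
    conv_lhs => rw [← RatFunc.num_div_denom f]
    rw [eq_div_iff (RatFunc.algebraMap_ne_zero f.denom_ne_zero), sub_mul,
      div_mul_cancel₀ _ (RatFunc.algebraMap_ne_zero f.denom_ne_zero)]
  by_cases hN : N = 0
  · rw [hrepr, hN, map_zero, zero_div]
    exact Or.inl rfl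
  refine Or.inr ?_
  rw [hrepr, div_polys_intDegree hN f.denom_ne_zero]
  have hlt : N.degree < f.num.degree := by
    apply degree_sub_lt _ hnum0
    · rw [leadingCoeff_mul, leadingCoeff_mul, leadingCoeff_C, leadingCoeff_X_pow, mul_one,
        hcdef, div_mul_cancel₀ _ hlcd]
    · rw [degree_eq_natDegree hnum0, degree_eq_natDegree hq0, hndq, hdegs]
  have := Polynomial.natDegree_lt_natDegree hN hlt
  omega

lemma ratDeriv_poly (u : K[X]) : ratDeriv (ψ u) = ψ (derivative u) := by
  rw [ratDeriv, RatFunc.num_algebraMap, RatFunc.denom_algebraMap]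
  simp

lemma ratDeriv_iter_poly (u : K[X]) (i : ℕ) :
    ratDeriv^[i] (ψ u) = ψ (derivative^[i] u) := by
  induction i with
  | zero => rfl
  | succ n ih => rw [Function.iterate_succ_apply', Function.iterate_succ_apply', ih, ratDeriv_poly]

lemma applyOp_poly (r : ℕ) (p : ℕ → K[X]) (u : K[X]) :
    applyOp r p (ψ u) = ψ (∑ i ∈ Finset.range (r + 1), p i * derivative^[i] u) := by
  rw [applyOp, map_sum]
  exact Finset.sum_congr rfl fun i _ => by rw [ratDeriv_iter_poly, map_mul]

lemma theta_zpow_nonneg {α : K} {k : ℤ} (hk : 0 ≤ k) :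
    (RatFunc.X - RatFunc.C α) ^ k = ψ ((X - C α) ^ k.toNat) := by
  rw [← theta_pow, Int.toNat_of_nonneg hk]

lemma theta_zpow_intDegree (α : K) (k : ℤ) :
    RatFunc.intDegree ((RatFunc.X - RatFunc.C α) ^ k) = k := by
  rcases le_or_gt 0 k with hk | hk
  · rw [theta_zpow_nonneg hk, RatFunc.intDegree_polynomial, natDegree_pow, natDegree_X_sub_C]
    omega
  · rw [show k = -(-k) by ring, zpow_neg, inv_eq_one_div,
      theta_zpow_nonneg (by omega : (0:ℤ) ≤ -k), ← map_one ψ, div_polys_intDegree one_ne_zero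
        (pow_ne_zero _ (X_sub_C_ne_zero α)), natDegree_one, natDegree_pow, natDegree_X_sub_C]
    omega

lemma theta_zpow_degLe {α : K} {k m : ℤ} (h : k ≤ m) :
    degLe m ((RatFunc.X - RatFunc.C α) ^ k) :=
  Or.inr (by rw [theta_zpow_intDegree]; exact h)

lemma Hinf_structure (r : ℕ) (p : ℕ → K[X]) (σinf : ℤ) (indinf : ℤ → K)
    (hindinf : ∀ s : ℤ,
      degLe (s - σinf - 1)
        (applyOp r p (RatFunc.X ^ s) - indinf (-s) • RatFunc.X ^ (s - σinf)))
    (Hinf : RatFunc K → RatFunc K)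
    (hHinf0 : ∀ R : RatFunc K, degLe (-1) R → Hinf R = R)
    (hHinf1 : ∀ (R : RatFunc K) (c : K) (s : ℤ), 0 ≤ s → c ≠ 0 →
      degLe (s - 1) (R - c • RatFunc.X ^ s) →
      ((indinf (-s - σinf) ≠ 0 ∧ 0 ≤ s + σinf) →
        Hinf R = Hinf (R - (c / indinf (-s - σinf)) • applyOp r p (RatFunc.X ^ (s + σinf)))) ∧
      (¬ (indinf (-s - σinf) ≠ 0 ∧ 0 ≤ s + σinf) →
        Hinf R = c • RatFunc.X ^ s + Hinf (R - c • RatFunc.X ^ s))) :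
    ∀ (n : ℕ) (T : RatFunc K), degLe ((n : ℤ) - 1) T →
      (∃ g : K[X], Hinf T = T + ψ g) ∧ degLe ((n : ℤ) - 1) (Hinf T) ∧
        Hinf (Hinf T) = Hinf T := by
  intro n
  induction n with
  | zero =>
    intro T hT
    rw [show ((0:ℕ):ℤ) - 1 = -1 by norm_num] at hT
    have h0 := hHinf0 T hT
    rw [show ((0:ℕ):ℤ) - 1 = -1 by norm_num]
    exact ⟨⟨0, by rw [h0, map_zero, add_zero]⟩, by rwa [h0], by rw [h0, h0]⟩
  | succ n ih =>
    intro T hT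
    rw [show ((n+1:ℕ):ℤ) - 1 = (n : ℤ) by push_cast; ring] at hT ⊢
    by_cases hT' : degLe ((n:ℤ) - 1) T
    · obtain ⟨hg, hd, hi⟩ := ih T hT'
      exact ⟨hg, degLe_mono (by omega) hd, hi⟩
    · obtain ⟨c, hc, hlead⟩ := lead_inf hT hT'
      have key := hHinf1 T c (n : ℤ) (by exact_mod_cast Nat.zero_le n) hc hlead
      by_cases hcond : indinf (-(n:ℤ) - σinf) ≠ 0 ∧ 0 ≤ (n:ℤ) + σinf
      · have heq := key.1 hcond
        set d := indinf (-(n:ℤ) - σinf) with hddef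
        set A := applyOp r p (RatFunc.X ^ ((n:ℤ) + σinf)) with hAdef
        have him : degLe ((n:ℤ) - 1) (A - d • RatFunc.X ^ ((n:ℤ))) := by
          have h := hindinf ((n:ℤ) + σinf)
          rw [show (n:ℤ) + σinf - σinf - 1 = (n:ℤ) - 1 by ring,
            show (n:ℤ) + σinf - σinf = (n:ℤ) by ring,
            show -((n:ℤ) + σinf) = -(n:ℤ) - σinf by ring] at h
          exact h
        have hT'd : degLe ((n:ℤ) - 1) (T - (c / d) • A) := by
          have hrw : T - (c / d) • A =
              (T - c • RatFunc.X ^ ((n:ℤ))) - (c / d) • (A - d • RatFunc.X ^ ((n:ℤ))) := by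
            rw [smul_sub, smul_smul, div_mul_cancel₀ _ hcond.1]
            ring
          rw [hrw]
          exact degLe_sub hlead (degLe_smul him)
        obtain ⟨⟨g, hgeq⟩, hd2, hi2⟩ := ih _ hT'd
        have hA : ∃ v : K[X], (c / d) • A = ψ v := by
          refine ⟨C (c / d) * (∑ i ∈ Finset.range (r + 1), p i *
            derivative^[i] (X ^ ((n:ℤ) + σinf).toNat)), ?_⟩
          rw [hAdef, X_zpow_nonneg hcond.2, applyOp_poly, map_mul, ← smul_eq]
        obtain ⟨v, hv⟩ := hA
        have hfinal2 : degLe ((n:ℤ)) (Hinf T) := by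
          rw [heq]; exact degLe_mono (by omega) hd2
        have hfinal3 : Hinf (Hinf T) = Hinf T := by rw [heq, hi2]
        exact ⟨⟨g - v, by rw [heq, hgeq, hv, map_sub]; ring⟩, hfinal2, hfinal3⟩
      · have heq := key.2 hcond
        set U := T - c • RatFunc.X ^ ((n:ℤ)) with hUdef
        obtain ⟨⟨g, hgeq⟩, hd2, hi2⟩ := ih U hlead
        refine ⟨⟨g, by rw [heq, hgeq, hUdef]; ring⟩, ?_, ?_⟩
        · rw [heq]
          exact degLe_add (degLe_smul (degLe_X_pow le_rfl)) (degLe_mono (by omega) hd2)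
        · rw [heq]
          have key2 := hHinf1 (c • RatFunc.X ^ ((n:ℤ)) + Hinf U) c (n : ℤ)
            (by exact_mod_cast Nat.zero_le n) hc
            (by rw [add_sub_cancel_left]; exact hd2)
          have h2 := key2.2 hcond
          rw [add_sub_cancel_left, hi2] at h2
          exact h2

lemma Hloc_structure [IsAlgClosed K] (r : ℕ) (p : ℕ → K[X]) (σα : K → ℤ) (indα : K → ℤ → K)
    (hindα : ∀ (α : K) (s : ℤ),
      ordGe α (-s + σα α + 1)
        (applyOp r p ((RatFunc.X - RatFunc.C α) ^ (-s)) -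
          indα α (-s) • (RatFunc.X - RatFunc.C α) ^ (-s + σα α)))
    (Hloc : K → RatFunc K → RatFunc K)
    (hHloc0 : ∀ (α : K) (R : RatFunc K), ordGe α 0 R → Hloc α R = R)
    (hHloc1 : ∀ (α : K) (R : RatFunc K) (c : K) (s : ℤ), 0 < s → c ≠ 0 →
      ordGe α (-s + 1) (R - c • (RatFunc.X - RatFunc.C α) ^ (-s)) →
      (indα α (-σα α - s) ≠ 0 →
        Hloc α R = Hloc α (R - (c / indα α (-σα α - s)) •
          applyOp r p ((RatFunc.X - RatFunc.C α) ^ (-s - σα α)))) ∧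
      (indα α (-σα α - s) = 0 →
        Hloc α R = c • (RatFunc.X - RatFunc.C α) ^ (-s) +
          Hloc α (R - c • (RatFunc.X - RatFunc.C α) ^ (-s))))
    (α : K) :
    ∀ (n : ℕ) (R : RatFunc K), (∀ β : K, β ≠ α → ordGe β 0 R) → ordGe α (-(n : ℤ)) R →
      ∃ (F : RatFunc K) (g : K[X]), Hloc α R = F + ψ g ∧
        (∀ β : K, β ≠ α → ordGe β 0 F) ∧ degLe (-1) F ∧ ordGe α (-(n : ℤ)) F ∧
        Hloc α F = F := by
  intro n
  induction n with
  | zero =>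
    intro R hpure hord
    rw [show (-(0:ℕ):ℤ) = 0 by norm_num] at hord
    have hall : ∀ β : K, ordGe β 0 R := by
      intro β
      by_cases hβ : β = α
      · rwa [hβ]
      · exact hpure β hβ
    obtain ⟨g, rfl⟩ := no_pole_poly hall
    refine ⟨0, g, by rw [hHloc0 α _ hord, zero_add], fun β _ => ordGe_zero_fun β 0,
      degLe_zero_fun (-1), ?_, hHloc0 α 0 (ordGe_zero_fun α 0)⟩
    rw [show (-(0:ℕ):ℤ) = 0 by norm_num]
    exact ordGe_zero_fun α 0
  | succ n ih =>
    intro R hpure hord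
    by_cases hR : ordGe α (-(n:ℤ)) R
    · obtain ⟨F, g, h1, h2, h3, h4, h5⟩ := ih R hpure hR
      exact ⟨F, g, h1, h2, h3, ordGe_mono (by push_cast; omega) h4, h5⟩
    · set s : ℤ := (n : ℤ) + 1 with hsdef
      have h1 : ordGe α (-s) R := by rwa [show -s = (-(n+1:ℕ):ℤ) by push_cast; ring]
      have h2 : ¬ ordGe α (-s + 1) R := by rwa [show -s + 1 = (-(n:ℤ)) by push_cast; ring]
      obtain ⟨c, hc, hlead⟩ := lead_alpha h1 h2
      have key := hHloc1 α R c s (by omega) hc hlead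
      by_cases hind : indα α (-σα α - s) = 0
      · have heq := key.2 hind
        set R' := R - c • (RatFunc.X - RatFunc.C α) ^ (-s) with hR'def
        have hordR' : ordGe α (-(n:ℤ)) R' := by
          rwa [show (-(n:ℤ)) = -s + 1 by omega]
        have hpureR' : ∀ β : K, β ≠ α → ordGe β 0 R' := fun β hβ =>
          ordGe_sub (hpure β hβ) (ordGe_smul (ordGe_zpow_other hβ _))
        obtain ⟨F', g, hg1, hg2, hg3, hg4, hg5⟩ := ih R' hpureR' hordR'
        refine ⟨c • (RatFunc.X - RatFunc.C α) ^ (-s) + F', g, ?_, ?_, ?_, ?_, ?_⟩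
        · rw [heq, hg1, add_assoc]
        · exact fun β hβ => ordGe_add (ordGe_smul (ordGe_zpow_other hβ _)) (hg2 β hβ)
        · exact degLe_add (degLe_smul (theta_zpow_degLe (by omega))) hg3
        · refine ordGe_add (ordGe_smul ?_) (ordGe_mono (by push_cast; omega) hg4)
          exact ordGe_mono (by push_cast; omega) (ordGe_self_zpow α (-s))
        · have key2 := hHloc1 α (c • (RatFunc.X - RatFunc.C α) ^ (-s) + F') c s (by omega) hc
            (by rw [add_sub_cancel_left]; rwa [show -s + 1 = (-(n:ℤ)) by omega])
          have h3 := key2.2 hind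
          rw [add_sub_cancel_left, hg5] at h3
          exact h3
      · have heq := key.1 hind
        set d := indα α (-σα α - s) with hddef
        set A := applyOp r p ((RatFunc.X - RatFunc.C α) ^ (-s - σα α)) with hAdef
        have him : ordGe α (-s + 1) (A - d • (RatFunc.X - RatFunc.C α) ^ (-s)) := by
          have h := hindα α (s + σα α)
          rw [show -(s + σα α) + σα α + 1 = -s + 1 by ring] at h
          have e1 : ((RatFunc.X - RatFunc.C α) ^ (-(s + σα α)) : RatFunc K) =
              (RatFunc.X - RatFunc.C α) ^ (-s - σα α) := by congr 1; ring
          have e2 : ((RatFunc.X - RatFunc.C α) ^ (-(s + σα α) + σα α) : RatFunc K) =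
              (RatFunc.X - RatFunc.C α) ^ (-s) := by congr 1; ring
          have e3 : indα α (-(s + σα α)) = d := by rw [hddef]; congr 1; ring
          rw [e1, e2, e3] at h
          exact h
        have hordR' : ordGe α (-(n:ℤ)) (R - (c / d) • A) := by
          have hrw : R - (c / d) • A =
              (R - c • (RatFunc.X - RatFunc.C α) ^ (-s)) -
                (c / d) • (A - d • (RatFunc.X - RatFunc.C α) ^ (-s)) := by
            rw [smul_sub, smul_smul, div_mul_cancel₀ _ hind]
            ring
          rw [hrw, show (-(n:ℤ)) = -s + 1 by omega]
          exact ordGe_sub hlead (ordGe_smul him)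
        have hpureR' : ∀ β : K, β ≠ α → ordGe β 0 (R - (c / d) • A) := fun β hβ =>
          ordGe_sub (hpure β hβ)
            (ordGe_smul (ordGe_applyOp r p (ordGe_zpow_other hβ _)))
        obtain ⟨F, g, hg1, hg2, hg3, hg4, hg5⟩ := ih _ hpureR' hordR'
        exact ⟨F, g, by rw [heq, hg1], hg2, hg3,
          ordGe_mono (by push_cast; omega) hg4, hg5⟩

end WHI

open WHI

theorem weak_hermite_idempotent {K : Type*} [Field K] [CharZero K]
    [IsAlgClosed K]
    (H : RatFunc K → RatFunc K)
    (r : ℕ) (p : ℕ → K[X]) (hpr : p r ≠ 0)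
    (σα : K → ℤ) (σinf : ℤ) (indα : K → ℤ → K) (indinf : ℤ → K)
    -- the shifts of `M` at finite points and at infinity:
    (hσα : ∀ α : K, IsLeast {m : ℤ | ∃ i ≤ r, p i ≠ 0 ∧
        m = (Polynomial.rootMultiplicity α (p i) : ℤ) - i} (σα α))
    (hσinf : IsGreatest {m : ℤ | ∃ i ≤ r, p i ≠ 0 ∧ m = (i : ℤ) - (p i).natDegree} σinf)
    -- the defining property of the indicial functions:
    -- `M((x−α)^{−s}) = ind_α(−s)(x−α)^{−s+σ_α}(1+o(1))` at `α`,
    (hindα : ∀ (α : K) (s : ℤ),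
      ordGe α (-s + σα α + 1)
        (applyOp r p ((RatFunc.X - RatFunc.C α) ^ (-s)) -
          indα α (-s) • (RatFunc.X - RatFunc.C α) ^ (-s + σα α)))
    -- `M(x^s) = ind_∞(−s) x^{s−σ_∞}(1+o(1))` at infinity:
    (hindinf : ∀ s : ℤ,
      degLe (s - σinf - 1)
        (applyOp r p (RatFunc.X ^ s) - indinf (-s) • RatFunc.X ^ (s - σinf)))
    (Hloc : K → RatFunc K → RatFunc K) (Hinf : RatFunc K → RatFunc K)
    -- the recursive definition of the local reduction `H_α`:
    (hHloc0 : ∀ (α : K) (R : RatFunc K), ordGe α 0 R → Hloc α R = R)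
    (hHloc1 : ∀ (α : K) (R : RatFunc K) (c : K) (s : ℤ), 0 < s → c ≠ 0 →
      ordGe α (-s + 1) (R - c • (RatFunc.X - RatFunc.C α) ^ (-s)) →
      (indα α (-σα α - s) ≠ 0 →
        Hloc α R = Hloc α (R - (c / indα α (-σα α - s)) •
          applyOp r p ((RatFunc.X - RatFunc.C α) ^ (-s - σα α)))) ∧
      (indα α (-σα α - s) = 0 →
        Hloc α R = c • (RatFunc.X - RatFunc.C α) ^ (-s) +
          Hloc α (R - c • (RatFunc.X - RatFunc.C α) ^ (-s))))
    -- the recursive definition of the reduction `H_∞` at infinity: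
    (hHinf0 : ∀ R : RatFunc K, degLe (-1) R → Hinf R = R)
    (hHinf1 : ∀ (R : RatFunc K) (c : K) (s : ℤ), 0 ≤ s → c ≠ 0 →
      degLe (s - 1) (R - c • RatFunc.X ^ s) →
      ((indinf (-s - σinf) ≠ 0 ∧ 0 ≤ s + σinf) →
        Hinf R = Hinf (R - (c / indinf (-s - σinf)) • applyOp r p (RatFunc.X ^ (s + σinf)))) ∧
      (¬ (indinf (-s - σinf) ≠ 0 ∧ 0 ≤ s + σinf) →
        Hinf R = c • RatFunc.X ^ s + Hinf (R - c • RatFunc.X ^ s)))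
    -- `H(R) = H_∞(R_{(∞)} + ∑_α H_α(R_{(α)}))` via partial fractions:
    (hH : ∀ R : RatFunc K, ∃ (S : Finset K) (pol : K → RatFunc K) (pinf : RatFunc K),
      (∃ q : K[X], pinf = algebraMap K[X] (RatFunc K) q) ∧
      (∀ α ∈ S, degLe (-1) (pol α) ∧ ∀ β : K, β ≠ α → ordGe β 0 (pol α)) ∧
      R = pinf + ∑ α ∈ S, pol α ∧
      H R = Hinf (pinf + ∑ α ∈ S, Hloc α (pol α)))
     :
    ∀ R : RatFunc K, H (H R) = H R := by
  classical
  intro R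
  obtain ⟨S, pol, pinf, ⟨q0, hq0⟩, hpol, hsum, hHR⟩ := hH R
  set ψ' := algebraMap K[X] (RatFunc K)
  -- local structure at each pole
  have hch : ∀ α : K, ∃ Fg : RatFunc K × K[X], α ∈ S →
      Hloc α (pol α) = Fg.1 + ψ' Fg.2 ∧ (∀ β : K, β ≠ α → ordGe β 0 Fg.1) ∧
        degLe (-1) Fg.1 ∧ Hloc α Fg.1 = Fg.1 := by
    intro α
    by_cases hα : α ∈ S
    · obtain ⟨n, hn⟩ := exists_ordGe α (pol α)
      obtain ⟨F, g, h1, h2, h3, _, h5⟩ := Hloc_structure r p σα indα hindα Hloc hHloc0 hHloc1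
        α n (pol α) (fun β hβ => (hpol α hα).2 β hβ) hn
      exact ⟨(F, g), fun _ => ⟨h1, h2, h3, h5⟩⟩
    · exact ⟨(0, 0), fun h => absurd h hα⟩
  choose Fg hFg using hch
  set F : K → RatFunc K := fun α => (Fg α).1 with hFdef
  set g : K → K[X] := fun α => (Fg α).2 with hgdef
  set W := pinf + ∑ α ∈ S, Hloc α (pol α) with hWdef
  set G0 : K[X] := q0 + ∑ α ∈ S, g α with hG0def
  have hW : W = ψ' G0 + ∑ α ∈ S, F α := by
    rw [hWdef, hG0def, map_add, map_sum, hq0]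
    rw [Finset.sum_congr rfl (fun α hα => (hFg α hα).1)]
    rw [Finset.sum_add_distrib]
    ring
  obtain ⟨N, hN⟩ := exists_degLe W
  obtain ⟨⟨gW, hgW⟩, _, hidem⟩ :=
    Hinf_structure r p σinf indinf hindinf Hinf hHinf0 hHinf1 N W hN
  have hHReq : H R = ψ' (G0 + gW) + ∑ α ∈ S, F α := by
    rw [hHR, hgW, hW]
    simp only [map_add]
    ring
  -- second decomposition
  obtain ⟨S', pol', pinf', ⟨q', hq'⟩, hpol', hsum', hHHR⟩ := hH (H R)
  set F' : K → RatFunc K := fun β => if β ∈ S then F β else 0 with hF'def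
  have hF'if : ∀ γ : K, F' γ = if γ ∈ S then F γ else 0 := fun γ => rfl
  have hF'pure : ∀ γ : K, ∀ β : K, β ≠ γ → ordGe β 0 (F' γ) := by
    intro γ β hβ
    rw [hF'if]
    by_cases hγ : γ ∈ S
    · rw [if_pos hγ]; exact (hFg γ hγ).2.1 β hβ
    · rw [if_neg hγ]; exact ordGe_zero_fun β 0
  have hF'deg : ∀ γ : K, degLe (-1) (F' γ) := by
    intro γ
    rw [hF'if]
    by_cases hγ : γ ∈ S
    · rw [if_pos hγ]; exact (hFg γ hγ).2.2.1
    · rw [if_neg hγ]; exact degLe_zero_fun (-1)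
  have key : ∀ γ ∈ S', pol' γ = F' γ := by
    intro γ hγ
    have htot : ψ' (G0 + gW) + ∑ α ∈ S, F α = pinf' + ∑ α ∈ S', pol' α := by
      rw [← hHReq, hsum']
    have hS : ∑ α ∈ S, F α = (∑ α ∈ S.erase γ, F α) + F' γ := by
      rw [hF'if]
      by_cases hγS : γ ∈ S
      · rw [if_pos hγS]
        exact (Finset.sum_erase_add S F hγS).symm
      · rw [if_neg hγS]
        rw [Finset.erase_eq_of_notMem hγS, add_zero]
    have hS' : ∑ α ∈ S', pol' α = (∑ α ∈ S'.erase γ, pol' α) + pol' γ :=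
      (Finset.sum_erase_add S' pol' hγ).symm
    have hDrepr : pol' γ - F' γ = (ψ' (G0 + gW) - pinf') +
        (∑ α ∈ S.erase γ, F α) - (∑ α ∈ S'.erase γ, pol' α) := by
      rw [hS, hS'] at htot
      linear_combination -htot
    have hreg : ∀ δ : K, ordGe δ 0 (pol' γ - F' γ) := by
      intro δ
      by_cases hδ : δ = γ
      · rw [hδ, hDrepr]
        refine ordGe_sub (ordGe_add (ordGe_sub (ordGe_poly γ _) ?_) ?_) ?_
        · rw [hq']; exact ordGe_poly γ q'
        · refine ordGe_sum _ _ fun β hβ => ?_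
          exact (hFg β (Finset.mem_of_mem_erase hβ)).2.1 γ (Finset.ne_of_mem_erase hβ).symm
        · refine ordGe_sum _ _ fun β hβ => ?_
          exact (hpol' β (Finset.mem_of_mem_erase hβ)).2 γ (Finset.ne_of_mem_erase hβ).symm
      · exact ordGe_sub ((hpol' γ hγ).2 δ hδ) (hF'pure γ δ hδ)
    have hdeg : degLe (-1) (pol' γ - F' γ) :=
      degLe_sub (hpol' γ hγ).1 (hF'deg γ)
    have := zero_of_reg_degLe hreg hdeg
    exact sub_eq_zero.mp this
  have hfix : ∀ γ ∈ S', Hloc γ (pol' γ) = pol' γ := by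
    intro γ hγ
    rw [key γ hγ, hF'if]
    by_cases hγS : γ ∈ S
    · rw [if_pos hγS]; exact (hFg γ hγS).2.2.2
    · rw [if_neg hγS]; exact hHloc0 γ 0 (ordGe_zero_fun γ 0)
  rw [hHHR, Finset.sum_congr rfl hfix, ← hsum', hHR, hidem]
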